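/- Let k ≥ 2 and let P be a Sylow 2-subgroup of the alternating group A_{2^k}. Then there exists a normal subgroup W of P such that: (1) W is isomorphic to the elementary abelian 2-group Fin (2^(k-1) - 1) → ZMod 2; (2) the quotient P / W is isomorphic to a Sylow 2-subgroup of the symmetric group S_{2^(k-1)}; and (3) W has a complement in P, i.e. P is an (internal) semidirect product of a subgroup isomorphic to a Sylow 2-subgroup of S_{2^(k-1)} with W. -/

import Mathlib

open Equiv Finset

namespace StmtAux

variable {m : ℕ}

/-- base permutation: `(i, j) ↦ (i, j + f i)` -/
def bperm (f : Fin m → ZMod 2) : Equiv.Perm (Fin m × ZMod 2) :=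
  Equiv.prodCongrRight (fun i => Equiv.addRight (f i))

@[simp] lemma bperm_apply (f : Fin m → ZMod 2) (x : Fin m × ZMod 2) :
    bperm f x = (x.1, x.2 + f x.1) := rfl

lemma bperm_mul (f g : Fin m → ZMod 2) : bperm f * bperm g = bperm (f + g) := by
  ext x : 1
  · simp [Equiv.Perm.mul_apply, add_assoc, add_comm, add_left_comm]

/-- top permutation: `(i, j) ↦ (σ i, j)` -/
def iperm : Equiv.Perm (Fin m) →* Equiv.Perm (Fin m × ZMod 2) :=
  MonoidHom.mk' (fun σ => Equiv.prodCongrLeft (fun _ => σ))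
    (by intro σ τ; ext x : 1; simp [Equiv.Perm.mul_apply, Equiv.prodCongrLeft])

@[simp] lemma iperm_apply (σ : Equiv.Perm (Fin m)) (x : Fin m × ZMod 2) :
    iperm σ x = (σ x.1, x.2) := rfl

lemma sign_iperm (σ : Equiv.Perm (Fin m)) : Equiv.Perm.sign (iperm σ) = 1 := by
  show Equiv.Perm.sign (Equiv.prodCongrLeft (fun _ : ZMod 2 => σ)) = 1
  rw [Equiv.Perm.sign_prodCongrLeft]
  simp [Finset.prod_const, Int.units_sq]

lemma sign_addRight (c : ZMod 2) : Equiv.Perm.sign (Equiv.addRight c) = (-1) ^ c.val := by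
  revert c; decide

lemma sign_bperm (f : Fin m → ZMod 2) (hf : ∑ i, f i = 0) :
    Equiv.Perm.sign (bperm f) = 1 := by
  rw [bperm, Equiv.Perm.sign_prodCongrRight]
  have : ∀ i, Equiv.Perm.sign (Equiv.addRight (f i)) = (-1 : ℤˣ) ^ (f i).val :=
    fun i => sign_addRight (f i)
  rw [Finset.prod_congr rfl (fun i _ => this i), Finset.prod_pow_eq_pow_sum]
  apply Even.neg_one_pow
  have h2 : ((∑ i, (f i).val : ℕ) : ZMod 2) = 0 := by
    push_cast
    simpa [ZMod.natCast_zmod_val] using hf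
  rw [ZMod.natCast_eq_zero_iff] at h2
  exact even_iff_two_dvd.mpr h2

end StmtAux

namespace StmtAux

variable {m : ℕ}

lemma iperm_conj (σ : Equiv.Perm (Fin m)) (f : Fin m → ZMod 2) :
    iperm σ * bperm f * (iperm σ)⁻¹ = bperm (f ∘ ⇑σ⁻¹) := by
  ext x : 1
  simp [Equiv.Perm.mul_apply, ← map_inv]

/-- sum-of-coordinates homomorphism -/
def sumHom (m : ℕ) : (Fin m → ZMod 2) →+ ZMod 2 :=
  AddMonoidHom.mk' (fun f => ∑ i, f i) (fun f g => by simp [Finset.sum_add_distrib])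

/-- the even-weight subgroup -/
def V (m : ℕ) : AddSubgroup (Fin m → ZMod 2) := (sumHom m).ker

lemma mem_V {f : Fin m → ZMod 2} : f ∈ V m ↔ ∑ i, f i = 0 := Iff.rfl

/-- the action of a permutation on the even-weight subgroup -/
def vconj (σ : Equiv.Perm (Fin m)) : V m ≃+ V m where
  toFun f := ⟨f.1 ∘ ⇑σ⁻¹, by
    have := f.2
    rw [mem_V] at this ⊢
    simpa using (Equiv.sum_comp (σ⁻¹ : Equiv.Perm (Fin m)) f.1).trans this⟩
  invFun f := ⟨f.1 ∘ ⇑σ, by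
    have := f.2
    rw [mem_V] at this ⊢
    simpa [Equiv.sum_comp (σ : Equiv.Perm (Fin m)) f.1] using this⟩
  left_inv f := by ext i; simp
  right_inv f := by ext i; simp
  map_add' f g := rfl

def vact : Equiv.Perm (Fin m) →* MulAut (Multiplicative (V m)) :=
  MonoidHom.mk' (fun σ => AddEquiv.toMultiplicative (vconj σ))
    (by
      intro σ τ
      ext f : 1
      refine congrArg Multiplicative.ofAdd (Subtype.ext ?_)
      rfl)

end StmtAux

namespace StmtAux

variable {m : ℕ}

variable (K : Subgroup (Equiv.Perm (Fin m)))

/-- abstract model: semidirect product of the even-weight group with `K` -/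
abbrev X (K : Subgroup (Equiv.Perm (Fin m))) :=
  SemidirectProduct (Multiplicative (V m)) ↥K (vact.comp K.subtype)

/-- `bperm` as a monoid hom on the even subgroup -/
def BV : Multiplicative (V m) →* Equiv.Perm (Fin m × ZMod 2) :=
  MonoidHom.mk' (fun f => bperm (Multiplicative.toAdd f).1)
    (fun f g => (bperm_mul _ _).symm)

/-- the embedding of the abstract model into the permutation group -/
def Phi : X K →* Equiv.Perm (Fin m × ZMod 2) :=
  SemidirectProduct.lift BV (iperm.comp K.subtype)
    (by
      intro g
      refine MonoidHom.ext fun f => ?_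
      simp only [MonoidHom.comp_apply, MulEquiv.coe_toMonoidHom, MulAut.conj_apply]
      show bperm ((Multiplicative.toAdd f).1 ∘ ⇑((g : Equiv.Perm (Fin m)))⁻¹)
          = iperm (g : Equiv.Perm (Fin m)) * bperm (Multiplicative.toAdd f).1 *
            (iperm (g : Equiv.Perm (Fin m)))⁻¹
      rw [iperm_conj])

lemma Phi_apply (x : X K) :
    Phi K x = bperm (Multiplicative.toAdd x.left).1 * iperm (x.right : Equiv.Perm (Fin m)) := by
  rfl

lemma Phi_injective : Function.Injective (Phi K) := by
  rw [← MonoidHom.ker_eq_bot_iff, eq_bot_iff]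
  intro x hx
  rw [MonoidHom.mem_ker, Phi_apply] at hx
  have hσ : ∀ i : Fin m, (x.right : Equiv.Perm (Fin m)) i = i := by
    intro i
    have := congrArg Prod.fst (DFunLike.congr_fun hx (i, 0))
    simpa [Equiv.Perm.mul_apply] using this
  have hσ1 : (x.right : Equiv.Perm (Fin m)) = 1 := Equiv.ext hσ
  have hf : ∀ i : Fin m, (Multiplicative.toAdd x.left).1 i = 0 := by
    intro i
    have := congrArg Prod.snd (DFunLike.congr_fun hx (i, 0))
    simpa [Equiv.Perm.mul_apply, hσ] using this
  have hx1 : x.left = 1 := by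
    refine congrArg Multiplicative.ofAdd (Subtype.ext ?_)
    funext i
    exact hf i
  rw [Subgroup.mem_bot]
  obtain ⟨xl, xr⟩ := x
  show SemidirectProduct.mk xl xr = SemidirectProduct.mk 1 1
  have h1 : xl = 1 := hx1
  have h2 : xr = 1 := Subtype.ext (by simpa using hσ1)
  rw [h1, h2]


lemma range_Phi_le_alternating :
    ∀ x : X K, Equiv.Perm.sign (Phi K x) = 1 := by
  intro x
  rw [Phi_apply, map_mul, sign_iperm, sign_bperm _ ((Multiplicative.toAdd x.left).2), mul_one]

end StmtAux

namespace StmtAux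

/-- reindexing the even subgroup -/
def vCongr {m n : ℕ} (h : m = n) : V m ≃+ V n := by subst h; exact AddEquiv.refl _

/-- the even subgroup of `(ZMod 2)^(n+1)` is `(ZMod 2)^n` -/
def evenEquiv (n : ℕ) : (Fin n → ZMod 2) ≃+ V (n + 1) where
  toFun f := ⟨Fin.snoc f (∑ i, f i), by
    rw [mem_V, Fin.sum_univ_castSucc]
    simp [CharTwo.add_self_eq_zero]⟩
  invFun g := g.1 ∘ Fin.castSucc
  left_inv f := by
    funext i
    simp
  right_inv g := by
    apply Subtype.ext
    funext i
    induction i using Fin.lastCases with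
    | last =>
      have hg := g.2
      rw [mem_V, Fin.sum_univ_castSucc] at hg
      have : ∑ i : Fin n, g.1 (Fin.castSucc i) = g.1 (Fin.last n) := by
        have := CharTwo.neg_eq (R := ZMod 2)
        rw [add_eq_zero_iff_eq_neg] at hg
        simpa [CharTwo.neg_eq] using hg
      simpa [Fin.snoc_last] using this
    | cast i => simp
  map_add' f g := by
    apply Subtype.ext
    funext i
    induction i using Fin.lastCases with
    | last => simp [Fin.snoc_last, Finset.sum_add_distrib]
    | cast i => simp

lemma card_V {m : ℕ} (hm : 1 ≤ m) : Nat.card (V m) = 2 ^ (m - 1) := by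
  obtain ⟨n, rfl⟩ : ∃ n, m = n + 1 := ⟨m - 1, by omega⟩
  rw [Nat.card_congr (evenEquiv n).toEquiv.symm]
  simp [Nat.card_eq_fintype_card]

end StmtAux

namespace StmtAux

variable {m : ℕ}

/-- the semidirect product is equivalent (as a type) to the product -/
def xEquiv (K : Subgroup (Equiv.Perm (Fin m))) : X K ≃ (V m) × ↥K where
  toFun x := (Multiplicative.toAdd x.left, x.right)
  invFun p := ⟨Multiplicative.ofAdd p.1, p.2⟩
  left_inv x := rfl
  right_inv p := rfl

instance (K : Subgroup (Equiv.Perm (Fin m))) : Finite (X K) :=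
  Finite.of_equiv _ (xEquiv K).symm

lemma card_X (K : Subgroup (Equiv.Perm (Fin m))) :
    Nat.card (X K) = Nat.card (V m) * Nat.card K := by
  rw [Nat.card_congr (xEquiv K), Nat.card_prod]

lemma padic_fact : ∀ j : ℕ, (Nat.factorial (2 ^ j)).factorization 2 = 2 ^ j - 1 := by
  intro j
  haveI : Fact (Nat.Prime 2) := ⟨Nat.prime_two⟩
  induction j with
  | zero => simp
  | succ j ih =>
    have h2 : (2 : ℕ) ^ (j + 1) = 2 * 2 ^ j := by ring
    rw [Nat.factorization_def _ Nat.prime_two] at ih ⊢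
    rw [h2, padicValNat_factorial_mul, ih]
    have : 1 ≤ 2 ^ j := Nat.one_le_two_pow
    omega

end StmtAux

namespace StmtAux

/-- `Equiv.permCongr` as a `MulEquiv` -/
def permMulCongr {α β : Type*} (e : α ≃ β) : Equiv.Perm α ≃* Equiv.Perm β :=
  { e.permCongr with
    map_mul' := fun σ τ => by
      ext x
      simp [Equiv.permCongr_apply, Equiv.Perm.mul_apply] }

@[simp] lemma permMulCongr_apply {α β : Type*} (e : α ≃ β) (σ : Equiv.Perm α) :
    permMulCongr e σ = e.permCongr σ := rfl

end StmtAux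


namespace StmtAux

open SemidirectProduct in
/-- generic structure transfer along an isomorphism with a semidirect product -/
lemma sdp_structure {P N H : Type*} [Group P] [Group N] [Group H] {f : H →* MulAut N}
    (ε : P ≃* (N ⋊[f] H)) :
    ∃ (W : Subgroup P) (π : P →* H) (C : Subgroup P), W.Normal ∧ Nonempty (W ≃* N) ∧
      Function.Surjective π ∧ π.ker = W ∧ C ⊓ W = ⊥ ∧ C ⊔ W = ⊤ ∧ Nonempty (C ≃* H) := by
  set π : P →* H := (rightHom : N ⋊[f] H →* H).comp ε.toMonoidHom with hπ
  set C : Subgroup P := Subgroup.comap ε.toMonoidHom (inr : H →* N ⋊[f] H).range with hC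
  have hmap : π.ker.map ε.toMonoidHom = (rightHom : N ⋊[f] H →* H).ker := by
    ext y
    rw [Subgroup.mem_map_equiv]
    simp [hπ, MonoidHom.mem_ker]
  have hWiso : Nonempty (π.ker ≃* N) :=
    ⟨(ε.subgroupMap π.ker).trans ((MulEquiv.subgroupCongr hmap).trans
      ((MulEquiv.subgroupCongr range_inl_eq_ker_rightHom.symm).trans
        (MonoidHom.ofInjective inl_injective).symm))⟩
  have hinf : C ⊓ π.ker = ⊥ := by
    rw [eq_bot_iff]
    rintro x ⟨hx1, hx2⟩
    obtain ⟨g, hg⟩ := hx1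
    rw [Subgroup.mem_bot]
    have hg1 : g = 1 := by
      have hx2' : rightHom (ε.toMonoidHom x) = 1 := hx2
      rw [← hg, rightHom_inr] at hx2'
      exact hx2'
    apply ε.injective
    have : inr g = ε x := hg
    rw [← this, hg1, map_one, map_one]
  have hsup : C ⊔ π.ker = ⊤ := by
    rw [eq_top_iff]
    intro x _
    have hdecomp : x = ε.symm (inl (ε x).left) * ε.symm (inr (ε x).right) := by
      apply ε.injective
      rw [map_mul, MulEquiv.apply_symm_apply, MulEquiv.apply_symm_apply,
        inl_left_mul_inr_right]
    rw [hdecomp]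
    refine Subgroup.mul_mem _ (Subgroup.mem_sup_right ?_) (Subgroup.mem_sup_left ?_)
    · rw [MonoidHom.mem_ker, hπ, MonoidHom.comp_apply, MulEquiv.coe_toMonoidHom,
        MulEquiv.apply_symm_apply, rightHom_inl]
    · rw [hC, Subgroup.mem_comap, MulEquiv.coe_toMonoidHom, MulEquiv.apply_symm_apply]
      exact ⟨(ε x).right, rfl⟩
  have hmapC : C.map ε.toMonoidHom = (inr : H →* N ⋊[f] H).range :=
    Subgroup.map_comap_eq_self_of_surjective ε.surjective _
  exact ⟨π.ker, π, C, MonoidHom.normal_ker π, hWiso,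
    rightHom_surjective.comp ε.surjective, rfl, hinf, hsup,
    ⟨(ε.subgroupMap C).trans ((MulEquiv.subgroupCongr hmapC).trans
      (MonoidHom.ofInjective inr_injective).symm)⟩⟩

end StmtAux


/-- Structure of a Sylow 2-subgroup `P` of `A_{2^k}` (`k ≥ 2`): there is a normal
subgroup `W ≤ P` isomorphic to the elementary abelian group
`Fin (2^(k-1) - 1) → ZMod 2`, with `P / W` isomorphic to a Sylow 2-subgroup `Q` of
`S_{2^(k-1)}` (expressed via a surjective homomorphism `P →* Q` with kernel `W`),
and `W` has a complement `H` in `P` with `H` isomorphic to `Q`. -/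
theorem stmt_3 (k : ℕ) (hk : 2 ≤ k)
    (P : Sylow 2 (alternatingGroup (Fin (2 ^ k))))
    (Q : Sylow 2 (Equiv.Perm (Fin (2 ^ (k - 1))))) :
    ∃ W : Subgroup ↥P, W.Normal ∧
      Nonempty (W ≃* Multiplicative (Fin (2 ^ (k - 1) - 1) → ZMod 2)) ∧
      (∃ φ : ↥P →* ↥Q, Function.Surjective φ ∧ φ.ker = W) ∧
      (∃ H : Subgroup ↥P, H ⊓ W = ⊥ ∧ H ⊔ W = ⊤ ∧ Nonempty (H ≃* ↥Q)) := by
  haveI : Fact (Nat.Prime 2) := ⟨Nat.prime_two⟩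
  have hm2 : 2 ≤ 2 ^ (k - 1) := by
    calc 2 = 2 ^ 1 := rfl
    _ ≤ 2 ^ (k - 1) := Nat.pow_le_pow_right (by norm_num) (by omega)
  have hmk : 2 * 2 ^ (k - 1) = 2 ^ k := by
    rw [← pow_succ']
    congr 1
    omega
  have ecard : Fintype.card (Fin (2 ^ (k - 1)) × ZMod 2) = 2 ^ k := by
    simp only [Fintype.card_prod, Fintype.card_fin, ZMod.card]
    omega
  set e : (Fin (2 ^ (k - 1)) × ZMod 2) ≃ Fin (2 ^ k) := Fintype.equivFinOfCardEq ecard with he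
  set Ψ : Equiv.Perm (Fin (2 ^ (k - 1)) × ZMod 2) ≃* Equiv.Perm (Fin (2 ^ k)) :=
    StmtAux.permMulCongr e with hΨ
  set F : StmtAux.X (Q : Subgroup (Equiv.Perm (Fin (2 ^ (k - 1))))) →* Equiv.Perm (Fin (2 ^ k)) :=
    Ψ.toMonoidHom.comp (StmtAux.Phi (Q : Subgroup (Equiv.Perm (Fin (2 ^ (k - 1)))))) with hF
  have hFinj : Function.Injective F := by
    intro x y hxy
    exact StmtAux.Phi_injective _ (Ψ.injective hxy)
  have hle : F.range ≤ alternatingGroup (Fin (2 ^ k)) := by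
    rintro _ ⟨x, rfl⟩
    rw [Equiv.Perm.mem_alternatingGroup]
    show Equiv.Perm.sign (Ψ (StmtAux.Phi _ x)) = 1
    rw [hΨ, StmtAux.permMulCongr_apply, Equiv.Perm.sign_permCongr]
    exact StmtAux.range_Phi_le_alternating _ x
  -- cardinalities
  have hcardQ : Nat.card ↥(Q : Subgroup (Equiv.Perm (Fin (2 ^ (k - 1))))) =
      2 ^ (2 ^ (k - 1) - 1) := by
    rw [Sylow.card_eq_multiplicity Q, Nat.card_eq_fintype_card, Fintype.card_perm,
      Fintype.card_fin, StmtAux.padic_fact]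
  haveI : Nontrivial (Fin (2 ^ k)) := by
    rw [← Fintype.one_lt_card_iff_nontrivial, Fintype.card_fin]
    exact Nat.one_lt_two_pow (by omega)
  have hA0 : Nat.card ↥(alternatingGroup (Fin (2 ^ k))) ≠ 0 := Nat.card_pos.ne'
  have hcardA : (Nat.card ↥(alternatingGroup (Fin (2 ^ k)))).factorization 2 = 2 ^ k - 2 := by
    have h2A : 2 * Nat.card ↥(alternatingGroup (Fin (2 ^ k))) = Nat.factorial (2 ^ k) := by
      rw [Nat.card_eq_fintype_card, two_mul_card_alternatingGroup, Fintype.card_perm,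
        Fintype.card_fin]
    have h1 : ((2 : ℕ) * Nat.card ↥(alternatingGroup (Fin (2 ^ k)))).factorization 2 =
        2 ^ k - 1 := by rw [h2A, StmtAux.padic_fact]
    rw [Nat.factorization_mul (by norm_num) hA0] at h1
    simp only [Finsupp.coe_add, Pi.add_apply, Nat.Prime.factorization_self Nat.prime_two] at h1
    omega
  have hcard : Nat.card ↥(F.range.subgroupOf (alternatingGroup (Fin (2 ^ k)))) =
      2 ^ (Nat.card ↥(alternatingGroup (Fin (2 ^ k)))).factorization 2 := by
    rw [Nat.card_congr (Subgroup.subgroupOfEquivOfLe hle).toEquiv,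
      Nat.card_congr (MonoidHom.ofInjective hFinj).toEquiv.symm, StmtAux.card_X,
      StmtAux.card_V (by omega), hcardQ, hcardA, ← pow_add]
    congr 1
    omega
  haveI : Finite (Sylow 2 ↥(alternatingGroup (Fin (2 ^ k)))) :=
    Finite.of_injective (fun (R : Sylow 2 ↥(alternatingGroup (Fin (2 ^ k)))) => (R : Set ↥(alternatingGroup (Fin (2 ^ k)))))
      SetLike.coe_injective
  set P0 : Sylow 2 ↥(alternatingGroup (Fin (2 ^ k))) :=
    Sylow.ofCard (F.range.subgroupOf (alternatingGroup (Fin (2 ^ k)))) hcard with hP0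
  have ε : ↥P ≃* StmtAux.X (Q : Subgroup (Equiv.Perm (Fin (2 ^ (k - 1))))) :=
    (Sylow.equiv P P0).trans ((Subgroup.subgroupOfEquivOfLe hle).trans
      (MonoidHom.ofInjective hFinj).symm)
  obtain ⟨W, π, C, hnorm, ⟨ιW⟩, hsurj, hker, hinf, hsup, hCiso⟩ := StmtAux.sdp_structure ε
  have h1 : (2 ^ (k - 1) - 1) + 1 = 2 ^ (k - 1) := by omega
  refine ⟨W, hnorm, ⟨ιW.trans (AddEquiv.toMultiplicative
    ((StmtAux.evenEquiv (2 ^ (k - 1) - 1)).trans (StmtAux.vCongr h1)).symm)⟩, ⟨π, hsurj, hker⟩,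
    C, hinf, hsup, hCiso⟩
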